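/- Suppose the Bellman operator H of a finite Markov decision process is a span-seminorm contraction with factor β ∈ (0,1), and suppose there exist Q* : S×A → ℝ and r* ∈ ℝ with H(Q*) − Q* = r*·e. Then the three sets {Q* + c·e : c ∈ ℝ}, {Q : H(Q) − Q = r*·e}, and {Q : p_span(H(Q) − Q) = 0} coincide. -/

import Mathlib

/-- The span seminorm of a vector over a finite nonempty index set:
`p_span(x) = (max_i x_i - min_i x_i) / 2`. -/
noncomputable def pspan {I : Type*} [Fintype I] [Nonempty I] (x : I → ℝ) : ℝ :=
  ((⨆ i, x i) - ⨅ i, x i) / 2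

/-- The Bellman operator of a finite MDP:
`[H(Q)](s,a) = R(s,a) + Σ_{s'} p(s'|s,a) · max_{a'} Q(s',a')`. -/
noncomputable def bellman {S A : Type*} [Fintype S] [Nonempty A]
    (p : S × A → S → ℝ) (R : S × A → ℝ) (Q : S × A → ℝ) : S × A → ℝ :=
  fun sa => R sa + ∑ s' : S, p sa s' * ⨆ a' : A, Q (s', a')

section aux
variable {I : Type*} [Fintype I] [Nonempty I]

private lemma bddA (x : I → ℝ) : BddAbove (Set.range x) := (Set.finite_range x).bddAbove
private lemma bddB (x : I → ℝ) : BddBelow (Set.range x) := (Set.finite_range x).bddBelow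

lemma my_iSup_add_const (x : I → ℝ) (c : ℝ) : (⨆ i, x i + c) = (⨆ i, x i) + c := by
  apply le_antisymm
  · exact ciSup_le fun i => add_le_add_left (le_ciSup (bddA x) i) c
  · have h : ∀ i, x i ≤ (⨆ i, x i + c) - c :=
      fun i => le_sub_iff_add_le.2 (le_ciSup (bddA fun i => x i + c) i)
    have := ciSup_le h
    linarith

lemma my_iInf_add_const (x : I → ℝ) (c : ℝ) : (⨅ i, x i + c) = (⨅ i, x i) + c := by
  apply le_antisymm
  · have h : ∀ i, (⨅ i, x i + c) - c ≤ x i :=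
      fun i => sub_le_iff_le_add.2 (ciInf_le (bddB fun i => x i + c) i)
    have := le_ciInf h
    linarith
  · exact le_ciInf fun i => add_le_add_left (ciInf_le (bddB x) i) c

lemma my_pspan_nonneg (x : I → ℝ) : 0 ≤ pspan x := by
  have i := Classical.arbitrary I
  have h1 : x i ≤ ⨆ j, x j := le_ciSup (bddA x) i
  have h2 : ⨅ j, x j ≤ x i := ciInf_le (bddB x) i
  unfold pspan; linarith

lemma my_pspan_eq_zero (x : I → ℝ) : pspan x = 0 ↔ ∃ c, ∀ i, x i = c := by
  constructor
  · intro h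
    refine ⟨⨅ j, x j, fun i => ?_⟩
    have h1 : x i ≤ ⨆ j, x j := le_ciSup (bddA x) i
    have h2 : ⨅ j, x j ≤ x i := ciInf_le (bddB x) i
    unfold pspan at h; linarith
  · rintro ⟨c, hc⟩
    have hs : (⨆ j, x j) = c :=
      le_antisymm (ciSup_le fun i => (hc i).le)
        ((hc (Classical.arbitrary I)) ▸ le_ciSup (bddA x) _)
    have hi : (⨅ j, x j) = c :=
      le_antisymm ((hc (Classical.arbitrary I)) ▸ ciInf_le (bddB x) _)
        (le_ciInf fun i => (hc i).ge)
    unfold pspan; rw [hs, hi]; ring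

lemma my_pspan_shift (x : I → ℝ) (c : ℝ) : pspan (fun i => x i + c) = pspan x := by
  unfold pspan
  rw [my_iSup_add_const, my_iInf_add_const]; ring

end aux

lemma my_bellman_shift {S A : Type*} [Fintype S] [Fintype A] [Nonempty A]
    (p : S × A → S → ℝ) (R : S × A → ℝ) (hp1 : ∀ sa, ∑ s' : S, p sa s' = 1)
    (Q : S × A → ℝ) (c : ℝ) :
    bellman p R (fun sa => Q sa + c) = fun sa => bellman p R Q sa + c := by
  funext sa
  unfold bellman
  have h1 : ∀ s' : S, (⨆ a' : A, (Q (s', a') + c)) = (⨆ a' : A, Q (s', a')) + c :=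
    fun s' => my_iSup_add_const (fun a' => Q (s', a')) c
  simp only [h1, mul_add, Finset.sum_add_distrib, ← Finset.sum_mul, hp1 sa]
  ring

/-- If `H` is a span-seminorm contraction with factor `β ∈ (0,1)` and `H(Q*) - Q* = r* e`,
then the sets `{Q* + c e}`, `{Q : H(Q) - Q = r* e}`, and `{Q : p_span(H(Q) - Q) = 0}`
all coincide. -/
theorem solution_sets_coincide {S A : Type*} [Fintype S] [Fintype A] [Nonempty S] [Nonempty A]
    (p : S × A → S → ℝ) (R : S × A → ℝ)
    (hp : ∀ sa s', 0 ≤ p sa s') (hp1 : ∀ sa, ∑ s' : S, p sa s' = 1)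
    (β : ℝ) (hβ0 : 0 < β) (hβ1 : β < 1)
    (hcontr : ∀ Q1 Q2 : S × A → ℝ,
      pspan (bellman p R Q1 - bellman p R Q2) ≤ β * pspan (Q1 - Q2))
    (Qstar : S × A → ℝ) (rstar : ℝ)
    (hfix : ∀ sa, bellman p R Qstar sa - Qstar sa = rstar) :
    ({Q : S × A → ℝ | ∃ c : ℝ, Q = fun sa => Qstar sa + c} =
        {Q : S × A → ℝ | ∀ sa, bellman p R Q sa - Q sa = rstar}) ∧
    ({Q : S × A → ℝ | ∃ c : ℝ, Q = fun sa => Qstar sa + c} =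
        {Q : S × A → ℝ | pspan (fun sa => bellman p R Q sa - Q sa) = 0}) := by
  have sub1 : ∀ Q : S × A → ℝ, (∃ c : ℝ, Q = fun sa => Qstar sa + c) →
      ∀ sa, bellman p R Q sa - Q sa = rstar := by
    rintro Q ⟨c, rfl⟩ sa
    rw [my_bellman_shift p R hp1 Qstar c]
    have := hfix sa
    simp only []
    linarith
  have sub2 : ∀ Q : S × A → ℝ, (∀ sa, bellman p R Q sa - Q sa = rstar) →
      pspan (fun sa => bellman p R Q sa - Q sa) = 0 := by
    intro Q h
    exact (my_pspan_eq_zero _).2 ⟨rstar, h⟩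
  have sub3 : ∀ Q : S × A → ℝ, pspan (fun sa => bellman p R Q sa - Q sa) = 0 →
      ∃ c : ℝ, Q = fun sa => Qstar sa + c := by
    intro Q h
    obtain ⟨k, hk⟩ := (my_pspan_eq_zero _).1 h
    have heq : (bellman p R Q - bellman p R Qstar) =
        fun sa => (Q - Qstar) sa + (k - rstar) := by
      funext sa
      have h1 := hk sa
      have h2 := hfix sa
      simp only [Pi.sub_apply]
      linarith
    have hle := hcontr Q Qstar
    rw [heq, my_pspan_shift] at hle
    have h0 : pspan (Q - Qstar) = 0 := by
      nlinarith [my_pspan_nonneg (Q - Qstar)]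
    obtain ⟨c, hc⟩ := (my_pspan_eq_zero _).1 h0
    refine ⟨c, ?_⟩
    funext sa
    have := hc sa
    simp only [Pi.sub_apply] at this
    linarith
  constructor
  · ext Q
    simp only [Set.mem_setOf_eq]
    exact ⟨sub1 Q, fun h => sub3 Q (sub2 Q h)⟩
  · ext Q
    simp only [Set.mem_setOf_eq]
    exact ⟨fun h => sub2 Q (sub1 Q h), sub3 Q⟩
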